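/- If F is an infinite field or V is an infinite-dimensional F-vector space, then |G^vec| = ∞: for every finite sequence of vectors in V there exists a vector of V in G^vec-general position to it. -/

import Mathlib

open scoped Classical

/-- The linear-independence general position relation `G^vec`: `x` is in general
position to `y` iff every vanishing linear combination of the entries of `x` and
`y` with at most `dim V` nonzero coefficients has all coefficients on `x` equal
to zero. (The bound is read as a cardinal so that it is no restriction when `V`
is infinite-dimensional.) -/
def Gvec (F : Type*) {V : Type*} [Field F] [AddCommGroup V] [Module F V]
    (x y : List V) : Prop :=
  ∀ (a : Fin x.length → F) (b : Fin y.length → F),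
    (((Finset.univ.filter fun i => a i ≠ 0).card +
        (Finset.univ.filter fun j => b j ≠ 0).card : ℕ) : Cardinal) ≤ Module.rank F V →
      (∑ i, a i • x.get i) + (∑ j, b j • y.get j) = 0 → ∀ i, a i = 0

/-- Over an infinite field, a vector space is not the union of finitely many
proper subspaces. -/
lemma exists_not_mem_of_forall_ne_top (F : Type*) {V : Type*} [Field F] [AddCommGroup V]
    [Module F V] [Infinite F] (s : Finset (Submodule F V)) (hs : ∀ p ∈ s, p ≠ ⊤) :
    ∃ x : V, ∀ p ∈ s, x ∉ p := by
  classical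
  induction s using Finset.induction with
  | empty => exact ⟨0, by simp⟩
  | @insert p s hp ih =>
    obtain ⟨x, hx⟩ := ih fun q hq => hs q (Finset.mem_insert_of_mem hq)
    by_cases hxp : x ∉ p
    · exact ⟨x, fun q hq => by
        rcases Finset.mem_insert.1 hq with rfl | hq
        · exact hxp
        · exact hx q hq⟩
    push_neg at hxp
    have hpt : p ≠ ⊤ := hs p (Finset.mem_insert_self p s)
    obtain ⟨y, hy⟩ : ∃ y : V, y ∉ p := by
      by_contra hall
      push_neg at hall
      exact hpt (Submodule.eq_top_iff'.2 hall)
    set T : Set F := ⋃ q ∈ insert p s, {c : F | x + c • y ∈ q} with hT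
    have key : ∀ q ∈ insert p s, Set.Subsingleton {c : F | x + c • y ∈ q} := by
      intro q hq c hc c' hc'
      by_contra hcc
      have h1 : (c - c') • y ∈ q := by
        have := q.sub_mem hc hc'
        simpa [sub_smul] using this
      have hy' : y ∈ q := by
        have := q.smul_mem (c - c')⁻¹ h1
        rwa [smul_smul, inv_mul_cancel₀ (sub_ne_zero.2 hcc), one_smul] at this
      rcases Finset.mem_insert.1 hq with rfl | hq'
      · exact hy hy'
      · have hx' : x ∈ q := by
          have := q.sub_mem hc (q.smul_mem c hy')
          simpa using this
        exact hx q hq' hx'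
    have hTfin : T.Finite :=
      Set.Finite.biUnion (Finset.finite_toSet _)
        (fun q hq => ((key q (Finset.mem_coe.1 hq)).finite))
    obtain ⟨c, hc⟩ := hTfin.infinite_compl.nonempty
    refine ⟨x + c • y, fun q hq hmem => ?_⟩
    exact hc (Set.mem_biUnion (Finset.mem_coe.2 hq) hmem)

/-- A sufficient condition for a single vector to be in `G^vec`-general position. -/
lemma gvec_of_forall (F : Type*) {V : Type*} [Field F] [AddCommGroup V] [Module F V]
    (x : V) (b : List V)
    (H : ∀ (a0 : F) (bb : Fin b.length → F), a0 ≠ 0 →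
        (((1 + (Finset.univ.filter fun j => bb j ≠ 0).card : ℕ)) : Cardinal) ≤ Module.rank F V →
        a0 • x + ∑ j, bb j • b.get j = 0 → False) :
    Gvec F [x] b := by
  intro a bb hcard hsum i
  by_contra ha
  have huniv : (Finset.univ : Finset (Fin [x].length)) = {i} := by
    refine Finset.eq_singleton_iff_unique_mem.2 ⟨Finset.mem_univ _, fun j _ => ?_⟩
    apply Fin.ext
    have h1 : (j : ℕ) < 1 := by simpa using j.isLt
    have h2 : (i : ℕ) < 1 := by simpa using i.isLt
    omega
  have hget : [x].get i = x := by
    rcases i with ⟨k, hk⟩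
    simp only [List.length_singleton] at hk
    obtain rfl : k = 0 := by omega
    rfl
  have hsum1 : (∑ k, a k • [x].get k) = a i • x := by
    rw [huniv, Finset.sum_singleton, hget]
  have hone : (Finset.univ.filter fun k => a k ≠ 0).card = 1 := by
    rw [huniv, Finset.filter_singleton, if_pos ha, Finset.card_singleton]
  refine H (a i) bb ha ?_ (by rw [← hsum1]; exact hsum)
  rw [← hone]
  exact hcard

/-- If `F` is an infinite field or `V` is infinite-dimensional, then
`|G^vec| = ∞`: every finite sequence of vectors of `V` admits a vector of `V`
in `G^vec`-general position to it. -/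
theorem Gvec_bound_infinite (F V : Type*) [Field F] [AddCommGroup V] [Module F V]
    (h : Infinite F ∨ ¬ Module.Finite F V) (b : List V) :
    ∃ x : V, Gvec F [x] b := by
  classical
  rcases h with hF | hV
  · haveI := hF
    set s : Finset (Submodule F V) :=
      ((Finset.univ : Finset (Finset (Fin b.length))).image
        (fun S => Submodule.span F ((S.image b.get : Finset V) : Set V))).filter
        (fun p => p ≠ ⊤) with hsdef
    obtain ⟨x, hx⟩ := exists_not_mem_of_forall_ne_top F s
      (fun p hp => (Finset.mem_filter.1 hp).2)
    refine ⟨x, gvec_of_forall F x b ?_⟩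
    intro a0 bb ha hcard hsum
    set S : Finset (Fin b.length) := Finset.univ.filter fun j => bb j ≠ 0 with hS
    set p : Submodule F V := Submodule.span F ((S.image b.get : Finset V) : Set V) with hpdef
    have hsum_mem : (∑ j, bb j • b.get j) ∈ p := by
      refine Submodule.sum_mem _ fun j _ => ?_
      by_cases hbj : bb j = 0
      · simp [hbj]
      · exact Submodule.smul_mem _ _ (Submodule.subset_span (by
          simp only [Finset.coe_image, Set.mem_image, Finset.mem_coe]
          exact ⟨j, by simp [hS, hbj], rfl⟩))
    have hxmem : x ∈ p := by
      have hx' : a0 • x = -(∑ j, bb j • b.get j) := eq_neg_of_add_eq_zero_left hsum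
      have hxe : x = a0⁻¹ • (-(∑ j, bb j • b.get j)) := by
        rw [← hx', smul_smul, inv_mul_cancel₀ ha, one_smul]
      rw [hxe]
      exact Submodule.smul_mem _ _ (Submodule.neg_mem _ hsum_mem)
    have hptop : p ≠ ⊤ := by
      intro htop
      have h1 : Module.rank F p ≤ ((S.image b.get).card : Cardinal) :=
        rank_span_finset_le _
      have h2 : Module.rank F V ≤ (S.card : Cardinal) := by
        rw [htop] at h1
        refine le_trans (by simpa using h1) ?_
        exact Nat.cast_le.2 Finset.card_image_le
      have h3 : ((1 + S.card : ℕ) : Cardinal) ≤ (S.card : Cardinal) :=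
        le_trans hcard h2
      have := Nat.cast_le.1 h3
      omega
    exact hx p (Finset.mem_filter.2
      ⟨Finset.mem_image.2 ⟨S, Finset.mem_univ _, rfl⟩, hptop⟩) hxmem
  · set p : Submodule F V := Submodule.span F {v | v ∈ b} with hpdef
    have hptop : p ≠ ⊤ := by
      intro htop
      apply hV
      rw [Module.finite_def]
      exact ⟨b.toFinset, by rw [List.coe_toFinset]; exact htop⟩
    obtain ⟨x, hx⟩ : ∃ x : V, x ∉ p := by
      by_contra hall
      push_neg at hall
      exact hptop (Submodule.eq_top_iff'.2 hall)
    refine ⟨x, gvec_of_forall F x b ?_⟩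
    intro a0 bb ha _ hsum
    have hsum_mem : (∑ j, bb j • b.get j) ∈ p :=
      Submodule.sum_mem _ fun j _ =>
        Submodule.smul_mem _ _ (Submodule.subset_span (b.get_mem j))
    have hx' : a0 • x = -(∑ j, bb j • b.get j) := eq_neg_of_add_eq_zero_left hsum
    have hxe : x = a0⁻¹ • (-(∑ j, bb j • b.get j)) := by
      rw [← hx', smul_smul, inv_mul_cancel₀ ha, one_smul]
    exact hx (hxe ▸ Submodule.smul_mem _ _ (Submodule.neg_mem _ hsum_mem))
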